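/- Let G be a 4-critical 3-connected graph with L(G) = {k, k+2l}, k ≥ 5, l ≥ 1, in which every two odd cycles share at least two vertices, and let C be a non-separating induced odd cycle with H = G − V(C) connected and bipartite with parts (A, B) such that all neighbors in H of vertices of C lie in A. Then |C| = k. -/

import Mathlib

open SimpleGraph

/-- The set of lengths of odd cycles of `G`. -/
def oddCycleLengths {V : Type*} (G : SimpleGraph V) : Set ℕ :=
  {n | Odd n ∧ ∃ (u : V) (w : G.Walk u u), w.IsCycle ∧ w.length = n}

/-- `G` is 4-critical. -/
def IsFourCritical {V : Type*} (G : SimpleGraph V) : Prop :=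
  G.chromaticNumber = 4 ∧ ∀ H : SimpleGraph V, H < G → H.chromaticNumber ≤ 3

/-- `G` is 3-connected: at least 4 vertices and deleting any set of at most two
vertices leaves a connected graph. -/
def ThreeConnected {V : Type*} [Fintype V] (G : SimpleGraph V) : Prop :=
  4 ≤ Fintype.card V ∧ ∀ u v : V, (G.induce (({u, v} : Set V)ᶜ)).Connected

namespace Stmt15Aux

open SimpleGraph Walk

variable {V : Type*} {G : SimpleGraph V}

lemma getVert_mem_support' {u v : V} (p : G.Walk u v) {i : ℕ} (hi : i ≤ p.length) :
    p.getVert i ∈ p.support :=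
  Walk.mem_support_iff_exists_getVert.mpr ⟨i, rfl, hi⟩

lemma IsPath.getVert_inj {u v : V} {p : G.Walk u v} (hp : p.IsPath) {i j : ℕ}
    (hi : i ≤ p.length) (hj : j ≤ p.length) (h : p.getVert i = p.getVert j) : i = j := by
  induction p generalizing i j with
  | nil => simp only [Walk.length_nil, Nat.le_zero] at hi hj; omega
  | @cons a u' b ha q ih =>
    rw [Walk.cons_isPath_iff] at hp
    match i, j with
    | 0, 0 => rfl
    | 0, (j+1) =>
      exfalso
      rw [Walk.getVert_zero, Walk.getVert_cons_succ] at h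
      exact hp.2 (h ▸ getVert_mem_support' q (by simp [Walk.length_cons] at hj; omega))
    | (i+1), 0 =>
      exfalso
      rw [Walk.getVert_zero, Walk.getVert_cons_succ] at h
      exact hp.2 (h.symm ▸ getVert_mem_support' q (by simp [Walk.length_cons] at hi; omega))
    | (i+1), (j+1) =>
      rw [Walk.getVert_cons_succ, Walk.getVert_cons_succ] at h
      have := ih hp.1 (by simp [Walk.length_cons] at hi; omega)
        (by simp [Walk.length_cons] at hj; omega) h
      omega

lemma parity_AB {A B : Set V}
    (hA : ∀ a ∈ A, ∀ a' ∈ A, ¬ G.Adj a a') (hB : ∀ b ∈ B, ∀ b' ∈ B, ¬ G.Adj b b')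
    {a b : V} (w : G.Walk a b) (hsupp : ∀ z ∈ w.support, z ∈ A ∪ B) :
    Even w.length ↔ (a ∈ A ↔ b ∈ A) := by
  induction w with
  | nil => simp
  | @cons a u b h w ih =>
    have ha : a ∈ A ∪ B := hsupp a (by simp)
    have hu : u ∈ A ∪ B := hsupp u (by simp)
    have hw : ∀ z ∈ w.support, z ∈ A ∪ B := fun z hz => hsupp z (by simp [hz])
    have key : u ∈ A ↔ a ∉ A := by
      constructor
      · intro huA haA; exact hA a haA u huA h
      · intro haA
        rcases hu with hu | hu
        · exact hu
        · rcases ha with ha | ha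
          · exact absurd ha haA
          · exact absurd h (hB a ha u hu)
    rw [Walk.length_cons, Nat.even_add_one, ih hw]
    tauto

lemma isCycle_append {S : Set V} {x y : V} {Q : G.Walk x y} {P : G.Walk y x}
    (hQ : Q.IsPath) (hP : P.IsPath)
    (hPS : ∀ z ∈ P.support, z ∈ S)
    (hQint : ∀ j, 1 ≤ j → j ≤ Q.length - 1 → Q.getVert j ∉ S)
    (hq : 2 ≤ Q.length) :
    (Q.append P).IsCycle := by
  rw [Walk.isCycle_def]
  refine ⟨⟨?_⟩, ?_, ?_⟩
  · rw [Walk.edges_append, List.nodup_append]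
    refine ⟨hQ.isTrail.edges_nodup, hP.isTrail.edges_nodup, ?_⟩
    intro e heQ e' heP hee; subst hee
    induction e using Sym2.ind with
    | _ u' v' =>
      have hu' : u' ∈ S := hPS u' (P.fst_mem_support_of_mem_edges heP)
      have hv' : v' ∈ S := hPS v' (P.snd_mem_support_of_mem_edges heP)
      have hadj : Q.toSubgraph.Adj u' v' :=
        (SimpleGraph.Subgraph.mem_edgeSet).1 ((Q.mem_edges_toSubgraph).2 heQ)
      rw [Walk.toSubgraph_adj_iff] at hadj
      obtain ⟨i, hie, hil⟩ := hadj
      rcases Nat.eq_zero_or_pos i with h0 | h1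
      · subst h0
        have hint : Q.getVert 1 ∉ S := hQint 1 le_rfl (by omega)
        rw [Sym2.eq_iff] at hie
        rcases hie with ⟨_, h⟩ | ⟨_, h⟩
        · exact hint (by rw [h]; exact hv')
        · exact hint (by rw [h]; exact hu')
      · have hint : Q.getVert i ∉ S := hQint i h1 (by omega)
        rw [Sym2.eq_iff] at hie
        rcases hie with ⟨h, _⟩ | ⟨h, _⟩
        · exact hint (by rw [h]; exact hu')
        · exact hint (by rw [h]; exact hv')
  · intro hnil
    have : (Q.append P).length = 0 := by rw [hnil]; rfl
    rw [Walk.length_append] at this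
    omega
  · rw [Walk.support_append, Walk.support_eq_cons Q, List.cons_append, List.tail_cons]
    rw [List.nodup_append]
    refine ⟨?_, ?_, ?_⟩
    · have := hQ.support_nodup
      rw [Walk.support_eq_cons Q] at this
      exact (List.nodup_cons.mp this).2
    · have := hP.support_nodup
      rw [Walk.support_eq_cons P] at this
      exact (List.nodup_cons.mp this).2
    · intro z hzQ z' hzP hzz; subst hzz
      have hzx : z ≠ x := by
        intro h; subst h
        have := hQ.support_nodup
        rw [Walk.support_eq_cons Q] at this
        exact (List.nodup_cons.mp this).1 hzQ
      have hzy : z ≠ y := by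
        intro h; subst h
        have := hP.support_nodup
        rw [Walk.support_eq_cons P] at this
        exact (List.nodup_cons.mp this).1 hzP
      have hzS : z ∈ S := hPS z (by rw [Walk.support_eq_cons P]; exact List.mem_cons_of_mem _ hzP)
      have hzsup : z ∈ Q.support := by
        rw [Walk.support_eq_cons Q]; exact List.mem_cons_of_mem _ hzQ
      obtain ⟨j, hj_eq, hj_le⟩ := Walk.mem_support_iff_exists_getVert.mp hzsup
      have hj0 : j ≠ 0 := by
        intro h; subst h; rw [Walk.getVert_zero] at hj_eq; exact hzx hj_eq.symm
      have hjl : j ≠ Q.length := by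
        intro h; subst h; rw [Walk.getVert_length] at hj_eq; exact hzy hj_eq.symm
      exact hQint j (by omega) (by omega) (by rw [hj_eq]; exact hzS)

lemma rot_step {x : V} (w : G.Walk x x) (hw : w.IsCycle) :
    ∃ (x' : V) (w' : G.Walk x' x'), w'.IsCycle ∧ w'.length = w.length ∧
      (∀ j, j < w.length → w'.getVert j = w.getVert (j + 1)) ∧
      w'.getVert w.length = w.getVert 1 ∧
      (∀ z, z ∈ w'.support ↔ z ∈ w.support) := by
  cases w with
  | nil => exact absurd rfl hw.ne_nil
  | @cons _ u _ h p =>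
    have hnodup : p.support.Nodup := by
      have := hw.support_nodup
      rwa [Walk.support_cons, List.tail_cons] at this
    have htr := hw.isTrail.edges_nodup
    rw [Walk.edges_cons, List.nodup_cons] at htr
    refine ⟨u, p.append (Walk.cons h Walk.nil), ?_, ?_, ?_, ?_, ?_⟩
    · rw [Walk.isCycle_def]
      refine ⟨⟨?_⟩, ?_, ?_⟩
      · rw [Walk.edges_append, List.nodup_append]
        refine ⟨htr.2, by simp, ?_⟩
        intro e he e' he' hee; subst hee
        simp only [Walk.edges_cons, Walk.edges_nil, List.mem_singleton] at he'
        subst he'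
        exact htr.1 he
      · intro hnil
        have : (p.append (Walk.cons h Walk.nil)).length = 0 := by rw [hnil]; rfl
        rw [Walk.length_append] at this
        simp at this
      · rw [Walk.support_append, Walk.support_eq_cons p, List.cons_append, List.tail_cons]
        simp only [Walk.support_cons, Walk.support_nil, List.tail_cons]
        rw [List.nodup_append]
        rw [Walk.support_eq_cons p, List.nodup_cons] at hnodup
        refine ⟨hnodup.2, List.nodup_singleton u, ?_⟩
        intro z hz z' hz' hzz; subst hzz
        simp only [List.mem_singleton] at hz'
        subst hz'
        exact hnodup.1 hz
    · rw [Walk.length_append, Walk.length_cons]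
      simp [Walk.length_cons]
    · intro j hj
      rw [Walk.length_cons] at hj
      rw [Walk.getVert_append, Walk.getVert_cons_succ]
      split_ifs with hlt
      · rfl
      · have hj' : j = p.length := by omega
        subst hj'
        simp [Walk.getVert_length]
    · rw [Walk.length_cons, Walk.getVert_append]
      have hlt : ¬ (p.length + 1 < p.length) := by omega
      rw [if_neg hlt]
      have h1 : p.length + 1 - p.length = 1 := by omega
      rw [h1]
      simp [Walk.getVert_cons_succ, Walk.getVert_zero]
    · intro z
      have hsup1 : (p.append (Walk.cons h Walk.nil)).support = p.support ++ [u] := by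
        rw [Walk.support_append, Walk.support_cons, Walk.support_nil, List.tail_cons]
      rw [hsup1, Walk.support_cons, List.mem_append, List.mem_singleton, List.mem_cons]
      constructor
      · rintro (hz | rfl)
        · exact Or.inr hz
        · exact Or.inr p.start_mem_support
      · rintro (rfl | hz)
        · exact Or.inl p.end_mem_support
        · exact Or.inl hz

lemma rot_iter {x : V} (c : G.Walk x x) (hc : c.IsCycle) (i : ℕ) :
    ∃ (x' : V) (w' : G.Walk x' x'), w'.IsCycle ∧ w'.length = c.length ∧
      (∀ j, j ≤ c.length → w'.getVert j = c.getVert ((i + j) % c.length)) ∧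
      (∀ z, z ∈ w'.support ↔ z ∈ c.support) := by
  have hn : 3 ≤ c.length := hc.three_le_length
  induction i with
  | zero =>
    refine ⟨x, c, hc, rfl, ?_, fun z => Iff.rfl⟩
    intro j hj
    rcases eq_or_lt_of_le hj with h | h
    · rw [h, Nat.zero_add, Nat.mod_self, Walk.getVert_length, Walk.getVert_zero]
    · rw [Nat.zero_add, Nat.mod_eq_of_lt h]
  | succ i ih =>
    obtain ⟨x', w', hw', hlen, hget, hsupp⟩ := ih
    obtain ⟨x'', w'', hw'', hlen2, hget2, hgetn, hsupp2⟩ := rot_step w' hw'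
    refine ⟨x'', w'', hw'', by rw [hlen2, hlen], ?_, fun z => (hsupp2 z).trans (hsupp z)⟩
    intro j hj
    rcases eq_or_lt_of_le hj with h | h
    · have h1 : w''.getVert j = w'.getVert 1 := by
        rw [h, ← hlen]
        exact hgetn
      rw [h1, hget 1 (by omega)]
      have h2 : (i + 1 + j) = (i + 1) + c.length := by omega
      rw [h2, Nat.add_mod_right]
    · have h1 : w''.getVert j = w'.getVert (j + 1) := hget2 j (by rw [hlen]; exact h)
      rw [h1, hget (j + 1) (by omega), show i + (j + 1) = i + 1 + j by omega]

lemma cycle_nbrs {x : V} {w : G.Walk x x} (hw : w.IsCycle) {z : V}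
    (h : w.toSubgraph.Adj x z) :
    z = w.getVert 1 ∨ z = w.getVert (w.length - 1) := by
  obtain ⟨i, hie, hil⟩ := (Walk.toSubgraph_adj_iff _).mp h
  cases w with
  | nil => exact absurd rfl hw.ne_nil
  | @cons _ u _ hadj p =>
    have hp : p.IsPath := by
      apply Walk.IsPath.mk'
      have := hw.support_nodup
      rwa [Walk.support_cons, List.tail_cons] at this
    have hkey : ∀ j, j ≤ (Walk.cons hadj p).length → (Walk.cons hadj p).getVert j = x →
        j = 0 ∨ j = (Walk.cons hadj p).length := by
      intro j hj hjx
      rcases Nat.eq_zero_or_pos j with h0 | h1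
      · exact Or.inl h0
      · right
        obtain ⟨j', rfl⟩ : ∃ j', j = j' + 1 := ⟨j - 1, by omega⟩
        rw [Walk.getVert_cons_succ] at hjx
        rw [Walk.length_cons] at hj ⊢
        have hend : p.getVert p.length = x := Walk.getVert_length p
        have := IsPath.getVert_inj hp (by omega) (le_refl p.length) (hjx.trans hend.symm)
        omega
    rw [Sym2.eq_iff] at hie
    rcases hie with ⟨hx, hz⟩ | ⟨hz, hx⟩
    · rcases hkey i (by omega) hx with h0 | h0
      · subst h0; exact Or.inl hz.symm
      · omega
    · rcases hkey (i + 1) (by omega) hx with h0 | h0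
      · omega
      · right
        rw [show (Walk.cons hadj p).length - 1 = i by omega]
        exact hz.symm

lemma exists_H_path {S : Set V} (hconn : (G.induce S).Connected) {a b : V}
    (ha : a ∈ S) (hb : b ∈ S) :
    ∃ (p : G.Walk a b), p.IsPath ∧ (∀ z ∈ p.support, z ∈ S) := by
  classical
  have hr : (G.induce S).Reachable ⟨a, ha⟩ ⟨b, hb⟩ := hconn ⟨a, ha⟩ ⟨b, hb⟩
  obtain ⟨q⟩ := hr
  let f : G.induce S →g G := (SimpleGraph.Embedding.induce (G := G) S).toHom
  have hfa : f ⟨a, ha⟩ = a := rfl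
  have hfb : f ⟨b, hb⟩ = b := rfl
  refine ⟨(q.toPath.val.map f).copy hfa hfb, ?_, ?_⟩
  · rw [Walk.isPath_copy]
    exact Walk.map_isPath_of_injective (SimpleGraph.Embedding.induce (G := G) S).injective q.toPath.2
  · intro z hz
    rw [Walk.support_copy, Walk.support_map, List.mem_map] at hz
    obtain ⟨⟨z', hz'⟩, _, rfl⟩ := hz
    exact hz'

end Stmt15Aux

open Stmt15Aux

theorem stmt15 {V : Type*} [Fintype V] (G : SimpleGraph V) (k l : ℕ)
    (hk : 5 ≤ k) (hl : 1 ≤ l)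
    (hcrit : IsFourCritical G) (h3c : ThreeConnected G)
    (hL : oddCycleLengths G = {k, k + 2 * l})
    -- every two odd cycles share at least two vertices
    (hint : ∀ (a b : V) (w1 : G.Walk a a) (w2 : G.Walk b b),
      w1.IsCycle → w2.IsCycle → Odd w1.length → Odd w2.length →
      2 ≤ ({x | x ∈ w1.support ∧ x ∈ w2.support} : Set V).ncard)
    -- `C` is a non-separating induced odd cycle
    (v : V) (c : G.Walk v v) (hc : c.IsCycle) (hodd : Odd c.length)
    (hind : ∀ x y, x ∈ c.support → y ∈ c.support → G.Adj x y → c.toSubgraph.Adj x y)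
    (hconn : (G.induce {x | x ∉ c.support}).Connected)
    -- `H = G - V(C)` is bipartite with bipartition `(A, B)`
    (A B : Set V)
    (hAB : A ∪ B = {x | x ∉ c.support}) (hdisj : Disjoint A B)
    (hA : ∀ a ∈ A, ∀ a' ∈ A, ¬ G.Adj a a')
    (hB : ∀ b ∈ B, ∀ b' ∈ B, ¬ G.Adj b b')
    -- all neighbors in `H` of vertices of `C` lie in `A`
    (hNA : ∀ u ∈ c.support, ∀ w, G.Adj u w → w ∉ c.support → w ∈ A) :
    c.length = k := by
  classical
  -- c.length is an odd cycle length
  have hmem : c.length ∈ oddCycleLengths G := ⟨hodd, v, c, hc, rfl⟩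
  rw [hL] at hmem
  rcases hmem with hmem | hmem
  · exact hmem
  -- now c.length = k + 2 * l; derive a contradiction
  exfalso
  rw [Set.mem_singleton_iff] at hmem
  have hkodd : Odd k := by
    have : k ∈ oddCycleLengths G := by rw [hL]; exact Set.mem_insert _ _
    exact this.1
  have hn3 : 3 ≤ c.length := hc.three_le_length
  have hn7 : 7 ≤ c.length := by omega
  -- any odd cycle has length k or k + 2l
  have oddmem : ∀ (x0 : V) (W : G.Walk x0 x0), W.IsCycle → Odd W.length →
      W.length = k ∨ W.length = k + 2 * l := by
    intro x0 W hW hWodd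
    have : W.length ∈ oddCycleLengths G := ⟨hWodd, x0, W, hW, rfl⟩
    rw [hL] at this
    rcases this with h | h
    · exact Or.inl h
    · exact Or.inr (Set.mem_singleton_iff.mp h)
  -- Step 1: every vertex of C has a neighbor in A
  have hA_nb : ∀ x ∈ c.support, ∃ m, m ∈ A ∧ G.Adj x m := by
    intro x hx
    by_contra hno
    push_neg at hno
    set w := c.rotate x hx with hw_def
    have hwc : w.IsCycle := hc.rotate hx
    set z1 := w.getVert 1 with hz1
    set z2 := w.getVert (w.length - 1) with hz2
    have hwlen : w.length = c.length := by
      have := congrArg Walk.length (c.take_spec hx)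
      rw [Walk.length_append] at this
      rw [hw_def, Walk.rotate, Walk.length_append]
      omega
    have hNsub : ∀ z, G.Adj x z → z = z1 ∨ z = z2 := by
      intro z hz
      by_cases hzc : z ∈ c.support
      · have h1 : c.toSubgraph.Adj x z := hind x z hx hzc hz
        have h2 : w.toSubgraph.Adj x z := by
          rw [hw_def, Walk.toSubgraph_rotate]; exact h1
        exact cycle_nbrs hwc h2
      · exact absurd (hNA x hx z hz hzc) (fun hA' => hno z hA' hz)
    obtain ⟨hcard, hconn3⟩ := h3c
    have hxz1 : x ≠ z1 := by
      have : G.Adj x z1 := by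
        have := w.adj_getVert_succ (by omega : 0 < w.length)
        rwa [Walk.getVert_zero] at this
      exact this.ne
    have hxz2 : x ≠ z2 := by
      have hadj : G.Adj (w.getVert (w.length - 1)) (w.getVert (w.length - 1 + 1)) :=
        w.adj_getVert_succ (by omega)
      have he : w.getVert (w.length - 1 + 1) = x := by
        rw [show w.length - 1 + 1 = w.length by omega, Walk.getVert_length]
      rw [he] at hadj
      exact hadj.ne'
    have hex : ∃ t : V, t ≠ z1 ∧ t ≠ z2 ∧ t ≠ x := by
      by_contra hcon
      push_neg at hcon
      have hsub : (Finset.univ : Finset V) ⊆ {z1, z2, x} := by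
        intro t _
        simp only [Finset.mem_insert, Finset.mem_singleton]
        by_cases h1 : t = z1
        · exact Or.inl h1
        by_cases h2 : t = z2
        · exact Or.inr (Or.inl h2)
        · exact Or.inr (Or.inr (hcon t h1 h2))
      have := Finset.card_le_card hsub
      have h3 : ({z1, z2, x} : Finset V).card ≤ 3 := by
        apply le_trans (Finset.card_insert_le _ _)
        have := Finset.card_insert_le z2 ({x} : Finset V)
        simp at this ⊢
        omega
      rw [Finset.card_univ] at this
      omega
    obtain ⟨t, ht1, ht2, htx⟩ := hex
    have hxmem : x ∈ (({z1, z2} : Set V)ᶜ) := by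
      simp only [Set.mem_compl_iff, Set.mem_insert_iff, Set.mem_singleton_iff]
      push_neg
      exact ⟨hxz1, hxz2⟩
    have htmem : t ∈ (({z1, z2} : Set V)ᶜ) := by
      simp only [Set.mem_compl_iff, Set.mem_insert_iff, Set.mem_singleton_iff]
      push_neg
      exact ⟨ht1, ht2⟩
    have hr : (G.induce (({z1, z2} : Set V)ᶜ)).Reachable ⟨x, hxmem⟩ ⟨t, htmem⟩ :=
      (hconn3 z1 z2) ⟨x, hxmem⟩ ⟨t, htmem⟩
    obtain ⟨q⟩ := hr
    have hqnil : ¬ q.Nil := by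
      apply Walk.not_nil_of_ne
      intro hq
      exact htx (congrArg Subtype.val hq).symm
    rw [Walk.not_nil_iff] at hqnil
    obtain ⟨u2, hadj2, q', _⟩ := hqnil
    have : G.Adj x u2.val := hadj2
    rcases hNsub u2.val this with h | h
    · exact u2.2 (by simp [h])
    · exact u2.2 (by simp [h])
  -- the key "same A-neighbor at distance two" lemma
  have hS : ∀ i : ℕ, ∀ m1 m2, m1 ∈ A → m2 ∈ A →
      G.Adj (c.getVert (i % c.length)) m1 → G.Adj (c.getVert ((i + 2) % c.length)) m2 →
      m1 = m2 := by
    intro i m1 m2 hm1A hm2A hm1 hm2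
    by_contra hne
    obtain ⟨x', w, hw, hwlen, hwget, hwsupp⟩ := rot_iter c hc i
    have hx'eq : x' = c.getVert (i % c.length) := by
      have := hwget 0 (by omega)
      simpa using this
    cases w with
    | nil => exact absurd rfl hw.ne_nil
    | @cons _ v1 _ h1 w1 =>
      cases w1 with
      | nil =>
        have : (1 : ℕ) = c.length := by
          simpa using hwlen
        omega
      | @cons _ y _ h2 p =>
        -- p : G.Walk y x', h1 : G.Adj x' v1, h2 : G.Adj v1 y
        have hplen : p.length = c.length - 2 := by
          rw [Walk.length_cons, Walk.length_cons] at hwlen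
          omega
        have hyeq : y = c.getVert ((i + 2) % c.length) := by
          have h20 := hwget 2 (by omega)
          rw [Walk.getVert_cons_succ, Walk.getVert_cons_succ, Walk.getVert_zero] at h20
          exact h20
        have hp : p.IsPath := by
          apply Walk.IsPath.mk'
          have := hw.support_nodup
          rw [Walk.support_cons, List.tail_cons, Walk.support_cons, List.nodup_cons] at this
          exact this.2
        have hpsub : ∀ z ∈ p.support, z ∈ c.support := by
          intro z hz
          have : z ∈ (Walk.cons h1 (Walk.cons h2 p)).support := by
            rw [Walk.support_cons, Walk.support_cons]
            exact List.mem_cons_of_mem _ (List.mem_cons_of_mem _ hz)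
          exact (hwsupp z).mp this
        -- m1, m2 are outside C
        have hm1H : m1 ∉ c.support := by
          have : m1 ∈ A ∪ B := Or.inl hm1A
          rw [hAB] at this
          exact this
        have hm2H : m2 ∉ c.support := by
          have : m2 ∈ A ∪ B := Or.inl hm2A
          rw [hAB] at this
          exact this
        -- path in H from m1 to m2
        obtain ⟨ρ, hρp, hρsub⟩ := exists_H_path hconn hm1H hm2H
        have hρAB : ∀ z ∈ ρ.support, z ∈ A ∪ B := by
          intro z hz
          rw [hAB]
          exact hρsub z hz
        have hρeven : Even ρ.length := by
          rw [parity_AB hA hB ρ hρAB]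
          exact ⟨fun _ => hm2A, fun _ => hm1A⟩
        have hρpos : 1 ≤ ρ.length := by
          by_contra hcon
          push_neg at hcon
          have : ρ.length = 0 := by omega
          exact hne (Walk.eq_of_length_eq_zero this)
        -- build the path Q : x' → y through H
        have hm1' : G.Adj x' m1 := by rw [hx'eq]; exact hm1
        have hm2' : G.Adj m2 y := by rw [hyeq]; exact hm2.symm
        set Q : G.Walk x' y := Walk.cons hm1' (ρ.append (Walk.cons hm2' Walk.nil)) with hQdef
        have hQlen : Q.length = ρ.length + 2 := by
          rw [hQdef, Walk.length_cons, Walk.length_append, Walk.length_cons, Walk.length_nil]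
        have hx'y : x' ≠ y := by
          intro hxy
          subst hxy
          rw [Walk.isPath_iff_eq_nil] at hp
          have : p.length = 0 := by simp [hp]
          omega
        have hQsupp : Q.support = x' :: (ρ.support ++ [y]) := by
          simp [hQdef, Walk.support_cons, Walk.support_append]
        have hQpath : Q.IsPath := by
          apply Walk.IsPath.mk'
          rw [hQsupp]
          rw [List.nodup_cons, List.nodup_append]
          refine ⟨?_, hρp.support_nodup, List.nodup_singleton _, ?_⟩
          · rw [List.mem_append, List.mem_singleton]
            push_neg
            have hx'c : x' ∈ c.support := by
              rw [hx'eq]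
              exact getVert_mem_support' c (Nat.le_of_lt (Nat.mod_lt _ (by omega)))
            exact ⟨fun hmem => (hρsub x' hmem) hx'c, hx'y⟩
          · intro z hz z' hz' hzz; subst hzz
            rw [List.mem_singleton] at hz'
            subst hz'
            have : z ∉ c.support := hρsub z hz
            exact this (by rw [hyeq]; exact getVert_mem_support' c (Nat.le_of_lt (Nat.mod_lt _ (by omega))))
        have hQint : ∀ j, 1 ≤ j → j ≤ Q.length - 1 → Q.getVert j ∉ c.support := by
          intro j hj1 hj2
          rw [hQlen] at hj2
          obtain ⟨j', rfl⟩ : ∃ j', j = j' + 1 := ⟨j - 1, by omega⟩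
          rw [hQdef, Walk.getVert_cons_succ, Walk.getVert_append]
          split_ifs with hlt
          · exact hρsub _ (getVert_mem_support' ρ (le_of_lt hlt))
          · have : j' = ρ.length := by omega
            subst this
            rw [Nat.sub_self, Walk.getVert_zero]
            exact hm2H
        -- the odd cycle Q ++ p is too long
        have hW : (Q.append p).IsCycle :=
          isCycle_append hQpath hp hpsub hQint (by omega)
        have hWlen : (Q.append p).length = ρ.length + 2 + (c.length - 2) := by
          rw [Walk.length_append, hQlen, hplen]
        have hWodd : Odd (Q.append p).length := by
          obtain ⟨m', hm'⟩ := hodd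
          obtain ⟨r, hr⟩ := hρeven
          rw [hWlen]
          exact ⟨r + m', by omega⟩
        rcases oddmem x' (Q.append p) hW hWodd with h | h <;>
        · rw [hWlen] at h
          obtain ⟨r, hr⟩ := hρeven
          omega
  -- Step 1 gives an A-neighbor m of v = c.getVert 0
  obtain ⟨m, hmA, hm0⟩ := hA_nb v c.start_mem_support
  -- propagation around the odd cycle
  have hprop : ∀ j : ℕ, G.Adj (c.getVert ((2 * j) % c.length)) m := by
    intro j
    induction j with
    | zero =>
      have h0 : (2 * 0) % c.length = 0 := by
        simp
      rw [h0, Walk.getVert_zero]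
      exact hm0
    | succ j ih =>
      have hmemsup : c.getVert ((2 * j + 2) % c.length) ∈ c.support :=
        getVert_mem_support' c (Nat.le_of_lt (Nat.mod_lt _ (by omega)))
      obtain ⟨m2, hm2A, hm2⟩ := hA_nb _ hmemsup
      have heq := hS (2 * j) m m2 hmA hm2A ih hm2
      rw [show 2 * (j + 1) = 2 * j + 2 by ring]
      rw [heq]
      exact hm2
  -- apply at j = (c.length + 1) / 2 to reach getVert 1
  obtain ⟨m', hm'⟩ := hodd
  have hj1 := hprop ((c.length + 1) / 2)
  have hdiv : 2 * ((c.length + 1) / 2) = c.length + 1 := by omega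
  rw [hdiv] at hj1
  have hmod : (c.length + 1) % c.length = 1 := by
    rw [Nat.add_mod_left]
    exact Nat.mod_eq_of_lt (by omega)
  rw [hmod] at hj1
  -- now m is adjacent to both c.getVert 0 = v and c.getVert 1, giving a triangle
  have hadj01 : G.Adj v (c.getVert 1) := by
    have := c.adj_getVert_succ (by omega : 0 < c.length)
    rwa [Walk.getVert_zero] at this
  set y := c.getVert 1 with hy_def
  have hmy : G.Adj m y := hj1.symm
  have hmC : m ∉ c.support := by
    have : m ∈ A ∪ B := Or.inl hmA
    rw [hAB] at this
    exact this
  set Q : G.Walk v y := Walk.cons hm0 (Walk.cons hmy Walk.nil) with hQdef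
  set P : G.Walk y v := Walk.cons hadj01.symm Walk.nil with hPdef
  have hymem : y ∈ c.support := getVert_mem_support' c (by omega)
  have hQpath : Q.IsPath := by
    apply Walk.IsPath.mk'
    rw [hQdef, Walk.support_cons, Walk.support_cons, Walk.support_nil, List.nodup_cons,
      List.nodup_cons]
    refine ⟨?_, ?_, List.nodup_singleton _⟩
    · intro hmem
      rcases List.mem_cons.mp hmem with h | h
      · exact hm0.ne h
      · rcases List.mem_cons.mp h with h' | h'
        · exact hadj01.ne h'
        · exact List.not_mem_nil h'
    · intro hmem
      rcases List.mem_cons.mp hmem with h | h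
      · exact hmy.ne h
      · exact List.not_mem_nil h
  have hPpath : P.IsPath := by
    apply Walk.IsPath.mk'
    rw [hPdef, Walk.support_cons, Walk.support_nil]
    simp [hadj01.ne']
  have hPsub : ∀ z ∈ P.support, z ∈ c.support := by
    intro z hz
    rw [hPdef, Walk.support_cons, Walk.support_nil, List.mem_cons, List.mem_singleton] at hz
    rcases hz with rfl | rfl
    · exact hymem
    · exact c.start_mem_support
  have hQlen : Q.length = 2 := by
    rw [hQdef, Walk.length_cons, Walk.length_cons, Walk.length_nil]
  have hQint : ∀ j, 1 ≤ j → j ≤ Q.length - 1 → Q.getVert j ∉ c.support := by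
    intro j hj1' hj2
    rw [hQlen] at hj2
    have : j = 1 := by omega
    subst this
    rw [hQdef]
    have : (Walk.cons hm0 (Walk.cons hmy Walk.nil)).getVert 1 = m := by
      rw [Walk.getVert_cons_succ, Walk.getVert_zero]
    rw [this]
    exact hmC
  have hW : (Q.append P).IsCycle := isCycle_append hQpath hPpath hPsub hQint (by omega)
  have hWlen : (Q.append P).length = 3 := by
    rw [Walk.length_append, hQlen, hPdef, Walk.length_cons, Walk.length_nil]
  have hWodd : Odd (Q.append P).length := by rw [hWlen]; exact ⟨1, rfl⟩
  rcases oddmem v (Q.append P) hW hWodd with h | h <;> rw [hWlen] at h <;> omega
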